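/- If x is a positive fixed point of T and A has all positive entries, then 1 is a simple eigenvalue of J_T(x), it equals the spectral radius of J_T(x), and x is a corresponding (positive) eigenvector. -/

import Mathlib

open Matrix

section PFAux

open Finset Polynomial Module

private lemma pf_charpoly_sub_one {n : ℕ} (M : Matrix (Fin n) (Fin n) ℝ) :
    (M - 1).charpoly = M.charpoly.comp (X + C 1) := by
  have h : M.charpoly.comp (X + C 1) = aeval (X + C 1 : ℝ[X]) M.charpoly := by
    rw [aeval_def, eval₂_eq_eval_map]; simp [Polynomial.comp, eval₂_eq_eval_map]
  rw [h, Matrix.charpoly, Matrix.charpoly, ← AlgHom.coe_toRingHom, RingHom.map_det]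
  congr 1
  refine Matrix.ext fun i j => ?_
  by_cases hij : i = j
  · subst hij
    simp only [charmatrix_apply_eq, Matrix.sub_apply, Matrix.one_apply_eq,
      AlgHom.coe_toRingHom, Matrix.map_apply, RingHom.mapMatrix_apply, map_sub, aeval_X, aeval_C]
    rw [Polynomial.algebraMap_eq]; ring
  · simp [charmatrix_apply_ne _ _ _ hij, Matrix.sub_apply, Matrix.one_apply_ne hij]

private lemma pf_ker {n : ℕ} (M : Matrix (Fin n) (Fin n) ℝ) (hM : ∀ i j, 0 < M i j)
    (x : Fin n → ℝ) (hx : ∀ i, 0 < x i) (hMx : M *ᵥ x = x)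
    (v : Fin n → ℝ) (hv : M *ᵥ v = v) : ∃ c : ℝ, v = c • x := by
  rcases Nat.eq_zero_or_pos n with hn | hn
  · exact ⟨0, by subst hn; ext i; exact absurd i.2 (by omega)⟩
  have : Nonempty (Fin n) := ⟨⟨0, hn⟩⟩
  obtain ⟨i0, hi0⟩ := Finite.exists_min (fun i => v i / x i)
  set m := v i0 / x i0 with hm
  refine ⟨m, ?_⟩
  set w : Fin n → ℝ := v - m • x with hw
  have hMw : M *ᵥ w = w := by
    rw [hw, Matrix.mulVec_sub, hv, Matrix.mulVec_smul, hMx]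
  have hw0 : ∀ j, 0 ≤ w j := by
    intro j
    have := hi0 j
    have hxj := hx j
    simp only [hw, Pi.sub_apply, Pi.smul_apply, smul_eq_mul, sub_nonneg]
    rw [div_le_div_iff₀ (hx i0) hxj] at this
    calc m * x j = v i0 / x i0 * x j := rfl
      _ ≤ v j := by rw [div_mul_eq_mul_div, div_le_iff₀ (hx i0)]; linarith
  have hwi0 : w i0 = 0 := by
    simp [hw, hm, div_mul_cancel₀ _ (hx i0).ne']
  have hsum : ∑ j, M i0 j * w j = 0 := by
    have := congrFun hMw i0
    rw [Matrix.mulVec, dotProduct] at this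
    rw [this, hwi0]
  have hz : ∀ j, w j = 0 := by
    have h := (Finset.sum_eq_zero_iff_of_nonneg (fun j _ =>
      mul_nonneg (hM i0 j).le (hw0 j))).mp hsum
    intro j
    have := h j (mem_univ j)
    exact (mul_eq_zero.mp this).resolve_left (hM i0 j).ne'
  ext j
  have := hz j
  simp only [hw, Pi.sub_apply, Pi.smul_apply, smul_eq_mul, sub_eq_zero] at this
  simp [this]

private lemma pf_left {n : ℕ} (hn : 0 < n) (M : Matrix (Fin n) (Fin n) ℝ)
    (hM : ∀ i j, 0 < M i j)
    (x : Fin n → ℝ) (hx : ∀ i, 0 < x i) (hMx : M *ᵥ x = x) :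
    ∃ w : Fin n → ℝ, (∀ i, 0 < w i) ∧ Mᵀ *ᵥ w = w := by
  have : Nonempty (Fin n) := ⟨⟨0, hn⟩⟩
  have hxne : x ≠ 0 := fun h => (hx ⟨0, hn⟩).ne' (congrFun h _)
  have hdet : (1 - M).det = 0 := by
    rw [← Matrix.exists_mulVec_eq_zero_iff]
    exact ⟨x, hxne, by rw [Matrix.sub_mulVec, hMx, Matrix.one_mulVec, sub_self]⟩
  have hdetT : (1 - Mᵀ).det = 0 := by
    rw [← Matrix.det_transpose, Matrix.transpose_sub, Matrix.transpose_one,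
      Matrix.transpose_transpose]
    exact hdet
  obtain ⟨w, hwne, hw⟩ := (Matrix.exists_mulVec_eq_zero_iff).mpr hdetT
  have hweig : Mᵀ *ᵥ w = w := by
    have := hw
    rw [Matrix.sub_mulVec, Matrix.one_mulVec, sub_eq_zero] at this
    exact this.symm
  set a : Fin n → ℝ := fun i => |w i| with ha
  have habs : ∀ i, |w i| ≤ (Mᵀ *ᵥ a) i := by
    intro i
    calc |w i| = |(Mᵀ *ᵥ w) i| := by rw [hweig]
      _ = |∑ j, Mᵀ i j * w j| := by rw [Matrix.mulVec, dotProduct]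
      _ ≤ ∑ j, |Mᵀ i j * w j| := Finset.abs_sum_le_sum_abs _ _
      _ = ∑ j, Mᵀ i j * a j := by
          refine Finset.sum_congr rfl fun j _ => ?_
          rw [abs_mul, abs_of_pos (show (0:ℝ) < Mᵀ i j from hM j i)]
      _ = (Mᵀ *ᵥ a) i := by rw [Matrix.mulVec, dotProduct]
  have hsum : ∑ i, x i * ((Mᵀ *ᵥ a) i - a i) = 0 := by
    have h1 : ∑ i, x i * (Mᵀ *ᵥ a) i = ∑ j, a j * x j := by
      simp_rw [Matrix.mulVec, dotProduct, Finset.mul_sum]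
      rw [Finset.sum_comm]
      refine Finset.sum_congr rfl fun j _ => ?_
      have : ∑ i, x i * (Mᵀ i j * a j) = a j * ∑ i, M j i * x i := by
        rw [Finset.mul_sum]; refine Finset.sum_congr rfl fun i _ => ?_
        rw [Matrix.transpose_apply]; ring
      rw [this]
      have : ∑ i, M j i * x i = x j := by
        have := congrFun hMx j; rw [Matrix.mulVec, dotProduct] at this; exact this
      rw [this]
    simp_rw [mul_sub]
    rw [Finset.sum_sub_distrib, h1]
    rw [sub_eq_zero]
    exact Finset.sum_congr rfl fun i _ => mul_comm _ _
  have heq : ∀ i, (Mᵀ *ᵥ a) i = a i := by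
    have hnn : ∀ i ∈ Finset.univ, 0 ≤ x i * ((Mᵀ *ᵥ a) i - a i) :=
      fun i _ => mul_nonneg (hx i).le (sub_nonneg.mpr (habs i))
    have := (Finset.sum_eq_zero_iff_of_nonneg hnn).mp hsum
    intro i
    have h := this i (mem_univ i)
    rcases mul_eq_zero.mp h with h | h
    · exact absurd h (hx i).ne'
    · linarith [sub_eq_zero.mp h]
  have haeig : Mᵀ *ᵥ a = a := funext heq
  obtain ⟨j0, hj0⟩ : ∃ j, w j ≠ 0 := by
    by_contra h; push_neg at h; exact hwne (funext h)
  have hapos : ∀ i, 0 < a i := by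
    intro i
    have := heq i
    rw [Matrix.mulVec, dotProduct] at this
    rw [← this]
    have : ∀ j ∈ Finset.univ, 0 ≤ Mᵀ i j * a j :=
      fun j _ => mul_nonneg (hM j i).le (abs_nonneg _)
    refine Finset.sum_pos' this ⟨j0, mem_univ j0, ?_⟩
    exact mul_pos (hM j0 i) (abs_pos.mpr hj0)
  exact ⟨a, hapos, haeig⟩

private lemma pf_bound {n : ℕ} (hn : 0 < n) (M : Matrix (Fin n) (Fin n) ℝ)
    (hM : ∀ i j, 0 < M i j)
    (x : Fin n → ℝ) (hx : ∀ i, 0 < x i) (hMx : M *ᵥ x = x)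
    (μ : ℂ) (hμ : μ ∈ spectrum ℂ (M.map Complex.ofReal)) : ‖μ‖ ≤ 1 := by
  have : Nonempty (Fin n) := ⟨⟨0, hn⟩⟩
  rw [spectrum.mem_iff, Matrix.isUnit_iff_isUnit_det, isUnit_iff_ne_zero, not_not] at hμ
  obtain ⟨v, hvne, hv⟩ := Matrix.exists_mulVec_eq_zero_iff.mpr hμ
  have heig : (M.map Complex.ofReal) *ᵥ v = μ • v := by
    rw [Matrix.sub_mulVec] at hv
    have h1 : (algebraMap ℂ (Matrix (Fin n) (Fin n) ℂ)) μ *ᵥ v = μ • v := by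
      rw [Algebra.algebraMap_eq_smul_one, Matrix.smul_mulVec, Matrix.one_mulVec]
    rw [sub_eq_zero] at hv
    rw [← hv, h1]
  obtain ⟨i0, hi0⟩ := Finite.exists_max (fun i => ‖v i‖ / x i)
  set c := ‖v i0‖ / x i0 with hc
  have hcpos : 0 < c := by
    obtain ⟨j, hj⟩ : ∃ j, v j ≠ 0 := by
      by_contra h; push_neg at h; exact hvne (funext h)
    calc (0:ℝ) < ‖v j‖ / x j := div_pos (norm_pos_iff.mpr hj) (hx j)
      _ ≤ c := hi0 j
  have hbd : ∀ j, ‖v j‖ ≤ c * x j := fun j => by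
    have := hi0 j
    rw [div_le_div_iff₀ (hx j) (hx i0)] at this
    rw [hc, div_mul_eq_mul_div, le_div_iff₀ (hx i0)]
    linarith
  have key : ‖μ‖ * ‖v i0‖ ≤ c * x i0 := by
    have h1 : (μ • v) i0 = ∑ j, (M i0 j : ℂ) * v j := by
      rw [← heig, Matrix.mulVec, dotProduct]
      simp [Matrix.map_apply]
    calc ‖μ‖ * ‖v i0‖ = ‖(μ • v) i0‖ := by simp [norm_smul]
      _ = ‖∑ j, (M i0 j : ℂ) * v j‖ := by rw [h1]
      _ ≤ ∑ j, ‖(M i0 j : ℂ) * v j‖ := norm_sum_le _ _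
      _ = ∑ j, M i0 j * ‖v j‖ := by
          refine Finset.sum_congr rfl fun j _ => ?_
          rw [norm_mul, Complex.norm_real, Real.norm_of_nonneg (hM i0 j).le]
      _ ≤ ∑ j, M i0 j * (c * x j) := by
          refine Finset.sum_le_sum fun j _ => ?_
          exact mul_le_mul_of_nonneg_left (hbd j) (hM i0 j).le
      _ = c * ∑ j, M i0 j * x j := by
          rw [Finset.mul_sum]; exact Finset.sum_congr rfl fun j _ => by ring
      _ = c * x i0 := by
          have := congrFun hMx i0; rw [Matrix.mulVec, dotProduct] at this; rw [this]
  have hvi0 : c * x i0 = ‖v i0‖ := by rw [hc, div_mul_cancel₀ _ (hx i0).ne']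
  rw [hvi0] at key
  have hvi0pos : 0 < ‖v i0‖ := by rw [← hvi0]; exact mul_pos hcpos (hx i0)
  exact (mul_le_iff_le_one_left hvi0pos).mp key

private lemma pf_mult {n : ℕ} (hn : 0 < n) (M : Matrix (Fin n) (Fin n) ℝ)
    (hM : ∀ i j, 0 < M i j)
    (x : Fin n → ℝ) (hx : ∀ i, 0 < x i) (hMx : M *ᵥ x = x) :
    M.charpoly.rootMultiplicity 1 = 1 := by
  have : Nonempty (Fin n) := ⟨⟨0, hn⟩⟩
  obtain ⟨w, hwpos, hw⟩ := pf_left hn M hM x hx hMx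
  have hxne : x ≠ 0 := fun h => (hx ⟨0, hn⟩).ne' (congrFun h _)
  set ψ : Module.End ℝ (Fin n → ℝ) := Matrix.mulVecLin (M - 1) with hψ
  have hψapp : ∀ v, ψ v = M *ᵥ v - v := by
    intro v
    simp [hψ, Matrix.mulVecLin_apply, Matrix.sub_mulVec, Matrix.one_mulVec]
  have hworth : ∀ v, ∑ i, w i * (ψ v) i = 0 := by
    intro v
    simp only [hψapp, Pi.sub_apply]
    have h1 : ∑ i, w i * (M *ᵥ v) i = ∑ j, w j * v j := by
      simp_rw [Matrix.mulVec, dotProduct, Finset.mul_sum]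
      rw [Finset.sum_comm]
      refine Finset.sum_congr rfl fun j _ => ?_
      have h2 : ∑ i, w i * (M i j * v j) = (∑ i, Mᵀ j i * w i) * v j := by
        rw [Finset.sum_mul]
        exact Finset.sum_congr rfl fun i _ => by rw [Matrix.transpose_apply]; ring
      rw [h2]
      have h3 : ∑ i, Mᵀ j i * w i = w j := by
        have := congrFun hw j; rw [Matrix.mulVec, dotProduct] at this; exact this
      rw [h3]
    simp_rw [mul_sub]
    rw [Finset.sum_sub_distrib, h1, sub_self]
  have hwx : 0 < ∑ i, w i * x i :=
    Finset.sum_pos (fun i _ => mul_pos (hwpos i) (hx i)) univ_nonempty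
  have hker : ∀ k (v : Fin n → ℝ), (ψ ^ k) v = 0 → ∃ c : ℝ, v = c • x := by
    intro k
    induction k with
    | zero => intro v hv; simp at hv; exact ⟨0, by simp [hv]⟩
    | succ k ih =>
      intro v hv
      rw [pow_succ, Module.End.mul_apply] at hv
      obtain ⟨c, hc⟩ := ih (ψ v) hv
      have hc0 : c = 0 := by
        have := hworth v
        rw [hc] at this
        simp_rw [Pi.smul_apply, smul_eq_mul] at this
        have : c * ∑ i, w i * x i = 0 := by
          rw [Finset.mul_sum]; rw [← this]
          exact Finset.sum_congr rfl fun i _ => by ring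
        rcases mul_eq_zero.mp this with h | h
        · exact h
        · exact absurd h hwx.ne'
      have hψv : M *ᵥ v = v := by
        have := hψapp v
        rw [hc, hc0, zero_smul] at this
        exact sub_eq_zero.mp this.symm
      exact pf_ker M hM x hx hMx v hψv
  have hspan : ψ.maxGenEigenspace 0 = Submodule.span ℝ {x} := by
    apply le_antisymm
    · intro v hv
      rw [Module.End.mem_maxGenEigenspace] at hv
      obtain ⟨k, hk⟩ := hv
      rw [zero_smul, sub_zero] at hk
      obtain ⟨c, hc⟩ := hker k v hk
      rw [hc]
      exact Submodule.smul_mem _ c (Submodule.mem_span_singleton_self x)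
    · rw [Submodule.span_singleton_le_iff_mem, Module.End.mem_maxGenEigenspace]
      exact ⟨1, by simp [hψapp, hMx]⟩
  have hrank : finrank ℝ (ψ.maxGenEigenspace 0) = 1 := by
    rw [hspan]; exact finrank_span_singleton hxne
  have hfin := LinearMap.finrank_maxGenEigenspace_zero_eq ψ
  have hcp : ψ.charpoly = (M - 1).charpoly := by
    rw [hψ, ← LinearMap.charpoly_toMatrix (Matrix.mulVecLin (M - 1)) (Pi.basisFun ℝ (Fin n)),
      LinearMap.toMatrix_eq_toMatrix']
    congr 1
    rw [← Matrix.toLin'_apply', LinearMap.toMatrix'_toLin']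
  rw [rootMultiplicity_eq_natTrailingDegree, ← pf_charpoly_sub_one, ← hcp, ← hfin, hrank]

end PFAux

/-- At a positive fixed point x, 1 is a simple eigenvalue of J_T(x) equal to its
    spectral radius, and x is a corresponding positive eigenvector. -/
theorem stmt_9 (n : ℕ) (hn : 0 < n) (A : Matrix (Fin n) (Fin n) ℝ) (hA : ∀ i j, 0 < A i j)
    (x : Fin n → ℝ) (hx : ∀ i, 0 < x i)
    (hfix : x = (Aᵀ *ᵥ (A *ᵥ x)⁻¹)⁻¹) :
    ((Matrix.diagonal x) ^ 2 * Aᵀ * (Matrix.diagonal ((A *ᵥ x)⁻¹)) ^ 2 * A).charpoly.rootMultiplicity 1 = 1 ∧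
    (1 : ℝ) ∈ spectrum ℝ ((Matrix.diagonal x) ^ 2 * Aᵀ * (Matrix.diagonal ((A *ᵥ x)⁻¹)) ^ 2 * A) ∧
    spectralRadius ℂ
        (((Matrix.diagonal x) ^ 2 * Aᵀ * (Matrix.diagonal ((A *ᵥ x)⁻¹)) ^ 2 * A).map
          Complex.ofReal) = 1 ∧
    ((Matrix.diagonal x) ^ 2 * Aᵀ * (Matrix.diagonal ((A *ᵥ x)⁻¹)) ^ 2 * A) *ᵥ x = x := by
  have hne : Nonempty (Fin n) := ⟨⟨0, hn⟩⟩
  set y : Fin n → ℝ := (A *ᵥ x)⁻¹ with hy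
  set J : Matrix (Fin n) (Fin n) ℝ :=
    (Matrix.diagonal x) ^ 2 * Aᵀ * (Matrix.diagonal y) ^ 2 * A with hJdef
  have hAx : ∀ i, 0 < (A *ᵥ x) i := fun i => by
    rw [Matrix.mulVec, dotProduct]
    exact Finset.sum_pos (fun j _ => mul_pos (hA i j) (hx j)) Finset.univ_nonempty
  have hypos : ∀ i, 0 < y i := fun i => by
    rw [hy, Pi.inv_apply]; exact inv_pos.mpr (hAx i)
  have hATy : ∀ i, 0 < (Aᵀ *ᵥ y) i := fun i => by
    rw [Matrix.mulVec, dotProduct]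
    exact Finset.sum_pos (fun j _ => mul_pos (hA j i) (hypos j)) Finset.univ_nonempty
  have hfix' : ∀ i, x i = ((Aᵀ *ᵥ y) i)⁻¹ := fun i => by
    have := congrFun hfix i
    rwa [Pi.inv_apply] at this
  have hxne : x ≠ 0 := fun h => (hx ⟨0, hn⟩).ne' (congrFun h _)
  -- J *ᵥ x = x
  have hJx : J *ᵥ x = x := by
    rw [hJdef, ← Matrix.mulVec_mulVec, ← Matrix.mulVec_mulVec, ← Matrix.mulVec_mulVec]
    have h2 : (Matrix.diagonal y) ^ 2 *ᵥ (A *ᵥ x) = y := by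
      ext i
      rw [sq, ← Matrix.mulVec_mulVec, Matrix.mulVec_diagonal, Matrix.mulVec_diagonal]
      have hyx : y i * (A *ᵥ x) i = 1 := by
        rw [hy, Pi.inv_apply, inv_mul_cancel₀ (hAx i).ne']
      rw [hyx, mul_one]
    rw [h2]
    have h3 : Aᵀ *ᵥ y = x⁻¹ := by
      ext i
      rw [Pi.inv_apply, hfix' i, inv_inv]
    rw [h3]
    ext i
    rw [sq, ← Matrix.mulVec_mulVec, Matrix.mulVec_diagonal, Matrix.mulVec_diagonal, Pi.inv_apply,
      mul_inv_cancel₀ (hx i).ne', mul_one]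
  -- J has positive entries
  have hJpos : ∀ i j, 0 < J i j := by
    intro i j
    have hJij : J i j = ∑ k, (x i * x i) * (Aᵀ i k * ((y k * y k) * A k j)) := by
      rw [hJdef, sq, sq, Matrix.diagonal_mul_diagonal, Matrix.diagonal_mul_diagonal,
        Matrix.mul_apply]
      refine Finset.sum_congr rfl fun k _ => ?_
      rw [Matrix.mul_diagonal, Matrix.diagonal_mul]
      ring
    rw [hJij]
    refine Finset.sum_pos (fun k _ => ?_) Finset.univ_nonempty
    exact mul_pos (mul_pos (hx i) (hx i))
      (mul_pos (hA k i) (mul_pos (mul_pos (hypos k) (hypos k)) (hA k j)))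
  -- 1 is an eigenvalue over ℝ
  have hspecR : (1 : ℝ) ∈ spectrum ℝ J := by
    rw [spectrum.mem_iff, _root_.map_one, Matrix.isUnit_iff_isUnit_det, isUnit_iff_ne_zero, not_not,
      ← Matrix.exists_mulVec_eq_zero_iff]
    exact ⟨x, hxne, by rw [Matrix.sub_mulVec, hJx, Matrix.one_mulVec, sub_self]⟩
  -- 1 is an eigenvalue over ℂ
  have hspecC : (1 : ℂ) ∈ spectrum ℂ (J.map Complex.ofReal) := by
    rw [spectrum.mem_iff, _root_.map_one, Matrix.isUnit_iff_isUnit_det, isUnit_iff_ne_zero, not_not,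
      ← Matrix.exists_mulVec_eq_zero_iff]
    refine ⟨fun i => (x i : ℂ), ?_, ?_⟩
    · intro h
      have h0 : ((x ⟨0, hn⟩ : ℝ) : ℂ) = 0 := by simpa using congrFun h ⟨0, hn⟩
      exact (hx ⟨0, hn⟩).ne' (by exact_mod_cast h0)
    · rw [Matrix.sub_mulVec, Matrix.one_mulVec, sub_eq_zero]
      ext i
      rw [Matrix.mulVec, dotProduct]
      have := congrFun hJx i
      rw [Matrix.mulVec, dotProduct] at this
      simp only [Matrix.map_apply]
      push_cast
      exact_mod_cast (congrArg (Complex.ofReal) this).symm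
  refine ⟨pf_mult hn J hJpos x hx hJx, hspecR, ?_, hJx⟩
  -- spectral radius
  rw [spectralRadius]
  apply le_antisymm
  · refine iSup₂_le fun μ hμ => ?_
    have h := pf_bound hn J hJpos x hx hJx μ hμ
    have h2 : ‖μ‖₊ ≤ 1 := by
      rw [← NNReal.coe_le_coe, coe_nnnorm, NNReal.coe_one]; exact h
    exact_mod_cast ENNReal.coe_le_one_iff.mpr h2
  · have hle := le_iSup₂ (f := fun (k : ℂ) (_ : k ∈ spectrum ℂ (J.map Complex.ofReal)) =>
      (‖k‖₊ : ENNReal)) 1 hspecC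
    simpa using hle
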